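/- Consider the change of variables x_i = 1/(1+u_i), c_i = α u_{i+1}/((1+u_i)(1+u_{i+1})). Define the continuant sequence D_{i,j}(α⁻¹c) by the recurrence D = D' - α⁻¹ c_j D''. Then D_{i,j}(α⁻¹c) = (1 + u_i + u_i u_{i+1} + ⋯ + u_i u_{i+1} ⋯ u_{j+1}) / ((1+u_i)(1+u_{i+1}) ⋯ (1+u_{j+1})). -/

import Mathlib

/-- The scaled continuant `D_{i,j}(λc)`, encoded by length:
`D lam c i ℓ` corresponds to `D_{i,j}(λc)` with `ℓ = j - i + 3`; it satisfies
`D_{i,i-2} = D_{i,i-1} = 1` and `D_{i,j} = D_{i,j-1} - λ c_j D_{i,j-2}`. -/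
noncomputable def D (lam : ℂ) (c : ℤ → ℂ) (i : ℤ) : ℕ → ℂ
  | 0 => 0
  | 1 => 1
  | 2 => 1
  | (m + 3) => D lam c i (m + 2) - lam * c (i + m) * D lam c i (m + 1)

/-- With `c_i = α u_{i+1}/((1+u_i)(1+u_{i+1}))`, one has
`D_{i,j}(α⁻¹c) = (1 + u_i + u_i u_{i+1} + ⋯ + u_i ⋯ u_{j+1}) /
((1+u_i)(1+u_{i+1}) ⋯ (1+u_{j+1}))`, for all `j ≥ i - 1`
(here `j = i + m - 1`, encoded length `m + 2`). -/
theorem stmt14 (u : ℤ → ℂ) (hu0 : ∀ i, u i ≠ 0) (hu1 : ∀ i, u i ≠ -1)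
    (alpha : ℂ) (halpha : alpha ≠ 0) (c : ℤ → ℂ)
    (hc : ∀ i : ℤ, c i = alpha * u (i + 1) / ((1 + u i) * (1 + u (i + 1)))) :
    ∀ (i : ℤ) (m : ℕ),
      D alpha⁻¹ c i (m + 2) =
        (∑ t ∈ Finset.range (m + 2), ∏ s ∈ Finset.range t, u (i + s)) /
          ∏ s ∈ Finset.range (m + 1), (1 + u (i + s)) := by
  intro i
  have h1 : ∀ j : ℤ, (1 : ℂ) + u j ≠ 0 := by
    intro j h
    exact hu1 j (by linear_combination h)
  have hP : ∀ n : ℕ, (∏ s ∈ Finset.range n, (1 + u (i + s))) ≠ 0 := by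
    intro n
    exact Finset.prod_ne_zero_iff.2 fun s _ => h1 _
  have key : ∀ m : ℕ,
      D alpha⁻¹ c i (m + 2) =
        (∑ t ∈ Finset.range (m + 2), ∏ s ∈ Finset.range t, u (i + s)) /
          ∏ s ∈ Finset.range (m + 1), (1 + u (i + s)) ∧
      D alpha⁻¹ c i (m + 3) =
        (∑ t ∈ Finset.range (m + 3), ∏ s ∈ Finset.range t, u (i + s)) /
          ∏ s ∈ Finset.range (m + 2), (1 + u (i + s)) := by
    intro m
    induction m with
    | zero =>
      constructor
      · show (1 : ℂ) = _
        simp only [Finset.sum_range_succ, Finset.sum_range_zero, Finset.prod_range_succ,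
          Finset.prod_range_zero]
        push_cast
        rw [eq_div_iff (by simpa using h1 i)]
        ring
      · show (1 : ℂ) - alpha⁻¹ * c (i + (0:ℕ)) * 1 = _
        rw [hc]
        simp only [Finset.sum_range_succ, Finset.sum_range_zero, Finset.prod_range_succ,
          Finset.prod_range_zero]
        push_cast
        have hA : (1 : ℂ) + u i ≠ 0 := h1 i
        have hB : (1 : ℂ) + u (i + 1) ≠ 0 := h1 (i + 1)
        simp only [add_zero]
        field_simp
        ring
    | succ m ih =>
      obtain ⟨ih1, ih2⟩ := ih
      refine ⟨ih2, ?_⟩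
      show D alpha⁻¹ c i (m + 3) - alpha⁻¹ * c (i + (m + 1 : ℕ)) * D alpha⁻¹ c i (m + 2) = _
      rw [ih1, ih2, hc]
      have e1 : (∑ t ∈ Finset.range (m + 4), ∏ s ∈ Finset.range t, u (i + s)) =
          (∑ t ∈ Finset.range (m + 3), ∏ s ∈ Finset.range t, u (i + s)) +
          (∏ s ∈ Finset.range (m + 2), u (i + s)) * u (i + (m + 2 : ℕ)) := by
        rw [Finset.sum_range_succ, Finset.prod_range_succ]
      have e2 : (∑ t ∈ Finset.range (m + 3), ∏ s ∈ Finset.range t, u (i + s)) =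
          (∑ t ∈ Finset.range (m + 2), ∏ s ∈ Finset.range t, u (i + s)) +
          (∏ s ∈ Finset.range (m + 2), u (i + s)) := by
        rw [Finset.sum_range_succ]
      have e3 : (∏ s ∈ Finset.range (m + 3), (1 + u (i + s))) =
          (∏ s ∈ Finset.range (m + 2), (1 + u (i + s))) * (1 + u (i + (m + 2 : ℕ))) := by
        rw [Finset.prod_range_succ]
      have e4 : (∏ s ∈ Finset.range (m + 2), (1 + u (i + s))) =
          (∏ s ∈ Finset.range (m + 1), (1 + u (i + s))) * (1 + u (i + (m + 1 : ℕ))) := by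
        rw [Finset.prod_range_succ]
      have hco : (i + (m + 1 : ℕ) + 1) = i + (m + 2 : ℕ) := by push_cast; ring
      rw [hco, e1, e2, e3, e4]
      have hA : (1 : ℂ) + u (i + ((m : ℤ) + 1)) ≠ 0 := h1 _
      have hB : (1 : ℂ) + u (i + ((m : ℤ) + 2)) ≠ 0 := h1 _
      have hPne : (∏ s ∈ Finset.range (m + 1), (1 + u (i + s))) ≠ 0 := hP (m + 1)
      push_cast at *
      field_simp
      ring
  exact fun m => (key m).1
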